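/- Let M ≥ 0 and ε ∈ (0,1), and set r_ε := −(1+M)(1−ε). Define Ψ_ε(r) := −1−M + (((1+r+M)³ − ε³·(1+M)³)/(1−ε³))^{1/3} for r > r_ε. Then Ψ_ε is strictly increasing and strictly concave on the interval (r_ε, ∞). -/

import Mathlib

/-- `Ψ_ε(r) = −1−M + (((1+r+M)³ − ε³(1+M)³)/(1−ε³))^{1/3}` is strictly increasing and
strictly concave on `(r_ε, ∞)` with `r_ε = −(1+M)(1−ε)`. -/
theorem stmt_17 (M ε : ℝ) (hM : 0 ≤ M) (hε : ε ∈ Set.Ioo (0 : ℝ) 1) :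
    StrictMonoOn
      (fun r : ℝ => -1 - M +
        (((1 + r + M) ^ 3 - ε ^ 3 * (1 + M) ^ 3) / (1 - ε ^ 3)) ^ ((1 : ℝ) / 3))
      (Set.Ioi (-((1 + M) * (1 - ε)))) ∧
    StrictConcaveOn ℝ (Set.Ioi (-((1 + M) * (1 - ε))))
      (fun r : ℝ => -1 - M +
        (((1 + r + M) ^ 3 - ε ^ 3 * (1 + M) ^ 3) / (1 - ε ^ 3)) ^ ((1 : ℝ) / 3)) := by
  obtain ⟨hε0, hε1⟩ := hε
  set g : ℝ → ℝ := fun r => ((1 + r + M) ^ 3 - ε ^ 3 * (1 + M) ^ 3) / (1 - ε ^ 3) with hgdef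
  set f : ℝ → ℝ := fun r => -1 - M + (g r) ^ ((1 : ℝ) / 3) with hfdef
  have hc : (0 : ℝ) < 1 - ε ^ 3 := by
    have : ε ^ 3 < 1 := pow_lt_one₀ hε0.le hε1 (by norm_num)
    linarith
  have hk : (0 : ℝ) < ε ^ 3 * (1 + M) ^ 3 := by positivity
  -- basic positivity facts on the domain
  have ha0 : ∀ r ∈ Set.Ioi (-((1 + M) * (1 - ε))), 0 < 1 + r + M := by
    intro r hr; simp only [Set.mem_Ioi] at hr; nlinarith
  have hgpos : ∀ r ∈ Set.Ioi (-((1 + M) * (1 - ε))), 0 < g r := by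
    intro r hr
    simp only [Set.mem_Ioi] at hr
    have h1 : ε * (1 + M) < 1 + r + M := by nlinarith
    have h2 : (0:ℝ) < ε * (1 + M) := by positivity
    have : ε ^ 3 * (1 + M) ^ 3 < (1 + r + M) ^ 3 := by
      have := pow_lt_pow_left₀ h1 h2.le (n := 3) (by norm_num)
      rwa [mul_pow] at this
    exact div_pos (by linarith) hc
  -- derivative of the affine part and of g
  have haff : ∀ r : ℝ, HasDerivAt (fun r : ℝ => 1 + r + M) 1 r := by
    intro r
    simpa using ((hasDerivAt_id r).const_add 1).add_const M
  have hgder : ∀ r : ℝ, HasDerivAt g (3 * (1 + r + M) ^ 2 / (1 - ε ^ 3)) r := by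
    intro r
    have := (((haff r).pow 3).sub_const (ε ^ 3 * (1 + M) ^ 3)).div_const (1 - ε ^ 3)
    refine this.congr_deriv ?_
    ring
  -- derivative of f on the domain
  have hd1 : ∀ r ∈ Set.Ioi (-((1 + M) * (1 - ε))),
      HasDerivAt f ((1 + r + M) ^ 2 / (1 - ε ^ 3) * (g r) ^ (-(2 : ℝ) / 3)) r := by
    intro r hr
    have h := ((hgder r).rpow_const (p := (1:ℝ)/3) (Or.inl (hgpos r hr).ne')).const_add (-1 - M)
    refine h.congr_deriv ?_
    rw [show (1 : ℝ) / 3 - 1 = -(2 : ℝ) / 3 by norm_num]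
    ring
  have hcont : ContinuousOn f (Set.Ioi (-((1 + M) * (1 - ε)))) := fun x hx =>
    (hd1 x hx).continuousAt.continuousWithinAt
  have hint : interior (Set.Ioi (-((1 + M) * (1 - ε)))) = Set.Ioi (-((1 + M) * (1 - ε))) :=
    interior_Ioi
  constructor
  · apply strictMonoOn_of_deriv_pos (convex_Ioi _) hcont
    intro x hx
    rw [hint] at hx
    rw [(hd1 x hx).deriv]
    have := ha0 x hx
    have := hgpos x hx
    have : (0:ℝ) < g x ^ (-(2 : ℝ) / 3) := Real.rpow_pos_of_pos this _
    positivity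
  · apply strictConcaveOn_of_deriv2_neg (convex_Ioi _) hcont
    intro x hx
    rw [hint] at hx
    have hax := ha0 x hx
    have hGx := hgpos x hx
    -- deriv f agrees with F1 near x
    set F1 : ℝ → ℝ := fun r => (1 + r + M) ^ 2 / (1 - ε ^ 3) * (g r) ^ (-(2 : ℝ) / 3) with hF1
    have hev : deriv f =ᶠ[nhds x] F1 :=
      Filter.eventuallyEq_of_mem (Ioi_mem_nhds hx) (fun y hy => (hd1 y hy).deriv)
    -- derivative of F1 at x
    have hu : HasDerivAt (fun r : ℝ => (1 + r + M) ^ 2 / (1 - ε ^ 3))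
        (2 * (1 + x + M) / (1 - ε ^ 3)) x := by
      have := ((haff x).pow 2).div_const (1 - ε ^ 3)
      refine this.congr_deriv ?_; ring
    have hv : HasDerivAt (fun r : ℝ => (g r) ^ (-(2 : ℝ) / 3))
        (3 * (1 + x + M) ^ 2 / (1 - ε ^ 3) * (-(2 : ℝ) / 3) * (g x) ^ (-(2 : ℝ) / 3 - 1)) x :=
      (hgder x).rpow_const (Or.inl hGx.ne')
    have hsplit : (g x) ^ (-(2 : ℝ) / 3) = g x * (g x) ^ (-(2 : ℝ) / 3 - 1) := by
      calc (g x) ^ (-(2 : ℝ) / 3) = (g x) ^ ((1 : ℝ) + (-(2 : ℝ) / 3 - 1)) := by norm_num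
        _ = (g x) ^ (1 : ℝ) * (g x) ^ (-(2 : ℝ) / 3 - 1) := Real.rpow_add hGx _ _
        _ = g x * (g x) ^ (-(2 : ℝ) / 3 - 1) := by rw [Real.rpow_one]
    have hF1der : HasDerivAt F1
        (-(2 * (1 + x + M) * (ε ^ 3 * (1 + M) ^ 3) / (1 - ε ^ 3) ^ 2)
          * (g x) ^ (-(2 : ℝ) / 3 - 1)) x := by
      refine (hu.mul hv).congr_deriv ?_
      rw [hsplit, hgdef]
      field_simp
      ring
    have h2 : deriv (deriv f) x =
        -(2 * (1 + x + M) * (ε ^ 3 * (1 + M) ^ 3) / (1 - ε ^ 3) ^ 2)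
          * (g x) ^ (-(2 : ℝ) / 3 - 1) := by
      rw [hev.deriv_eq, hF1der.deriv]
    have : deriv^[2] f x = deriv (deriv f) x := by
      simp [Function.iterate_succ, Function.comp]
    rw [this, h2]
    have hP : (0:ℝ) < (g x) ^ (-(2 : ℝ) / 3 - 1) := Real.rpow_pos_of_pos hGx _
    have : (0:ℝ) < 2 * (1 + x + M) * (ε ^ 3 * (1 + M) ^ 3) / (1 - ε ^ 3) ^ 2 := by positivity
    nlinarith
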